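/- Let Z be a measurable space, ℓ : ℝ^d × Z → ℝ a measurable loss, and (Π_θ)_{θ∈ℝ^d} a family of probability measures on Z. Assume: (i) ℓ is L₀-Lipschitz in θ uniformly in z, i.e., |ℓ(θ₁; z) − ℓ(θ₂; z)| ≤ L₀‖θ₁ − θ₂‖ for all θ₁, θ₂ ∈ ℝ^d and z ∈ Z; (ii) |ℓ(θ; z)| ≤ G for all θ, z; (iii) d_TV(Π_{θ₁}, Π_{θ₂}) ≤ L₁‖θ₁ − θ₂‖ for all θ₁, θ₂ ∈ ℝ^d. Then the performative risk L(θ) := E_{Z∼Π_θ}[ℓ(θ; Z)] is (L₀ + 2 L₁ G)-Lipschitz continuous, i.e., |L(θ₁) − L(θ₂)| ≤ (L₀ + 2 L₁ G)‖θ₁ − θ₂‖ for all θ₁, θ₂ ∈ ℝ^d. -/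

import Mathlib

open MeasureTheory

/-- Total variation distance `d_TV(μ, ν) = sup_{A measurable} (μ(A) − ν(A))`. -/
noncomputable def dTV {Z : Type*} [MeasurableSpace Z] (μ ν : Measure Z) : ℝ :=
  ⨆ A : {A : Set Z // MeasurableSet A}, ((μ A.1).toReal - (ν A.1).toReal)

lemma dTV_bdd {Z : Type*} [MeasurableSpace Z] (μ ν : Measure Z)
    [IsProbabilityMeasure μ] [IsProbabilityMeasure ν] :
    BddAbove (Set.range fun A : {A : Set Z // MeasurableSet A} =>
      ((μ A.1).toReal - (ν A.1).toReal)) := by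
  refine ⟨1, fun x hx => ?_⟩
  obtain ⟨A, rfl⟩ := hx
  show (μ A.1).toReal - (ν A.1).toReal ≤ 1
  have h1 : (μ A.1).toReal ≤ 1 := by
    have := prob_le_one (μ := μ) (s := A.1)
    simpa using ENNReal.toReal_mono (by simp) this
  have h2 : 0 ≤ (ν A.1).toReal := ENNReal.toReal_nonneg
  linarith

lemma le_dTV {Z : Type*} [MeasurableSpace Z] (μ ν : Measure Z)
    [IsProbabilityMeasure μ] [IsProbabilityMeasure ν] {A : Set Z} (hA : MeasurableSet A) :
    (μ A).toReal - (ν A).toReal ≤ dTV μ ν :=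
  le_ciSup (dTV_bdd μ ν) ⟨A, hA⟩

lemma dTV_symm {Z : Type*} [MeasurableSpace Z] (μ ν : Measure Z)
    [IsProbabilityMeasure μ] [IsProbabilityMeasure ν] :
    dTV ν μ ≤ dTV μ ν := by
  refine ciSup_le fun A => ?_
  have hμ : (μ A.1).toReal + (μ A.1ᶜ).toReal = 1 := by
    rw [← ENNReal.toReal_add (measure_ne_top _ _) (measure_ne_top _ _),
      measure_add_measure_compl A.2]
    simp
  have hν : (ν A.1).toReal + (ν A.1ᶜ).toReal = 1 := by
    rw [← ENNReal.toReal_add (measure_ne_top _ _) (measure_ne_top _ _),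
      measure_add_measure_compl A.2]
    simp
  have := le_dTV μ ν A.2.compl
  linarith

lemma key {Z : Type*} [MeasurableSpace Z] (μ ν : Measure Z)
    [IsProbabilityMeasure μ] [IsProbabilityMeasure ν] (f : Z → ℝ) (hf : Measurable f)
    (G : ℝ) (hG : ∀ z, |f z| ≤ G) :
    (∫ z, f z ∂μ) - ∫ z, f z ∂ν ≤ 2 * G * dTV μ ν := by
  obtain ⟨s, hs, h1, h2⟩ := hahn_decomposition (μ := μ) (ν := ν)
  haveI : Nonempty Z := by
    rcases Set.eq_empty_or_nonempty (Set.univ : Set Z) with h | h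
    · exact absurd (by simp [h] : μ Set.univ = 0) (by simp)
    · exact Set.nonempty_iff_univ_nonempty.mpr h
  have hGnn : 0 ≤ G := le_trans (abs_nonneg _) (hG (Classical.arbitrary Z))
  have hint : ∀ (ρ : Measure Z) [IsProbabilityMeasure ρ] (t : Set Z), Integrable f (ρ.restrict t) := by
    intro ρ hρ t
    refine (integrable_const G).mono' (hf.aestronglyMeasurable) (ae_of_all _ fun z => ?_)
    simpa [Real.norm_eq_abs] using hG z
  -- restrict comparisons
  have hres1 : ν.restrict s ≤ μ.restrict s := by
    refine Measure.le_intro fun t ht _ => ?_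
    rw [Measure.restrict_apply ht, Measure.restrict_apply ht]
    exact h1 _ (ht.inter hs) Set.inter_subset_right
  have hres2 : μ.restrict sᶜ ≤ ν.restrict sᶜ := by
    refine Measure.le_intro fun t ht _ => ?_
    rw [Measure.restrict_apply ht, Measure.restrict_apply ht]
    exact h2 _ (ht.inter hs.compl) Set.inter_subset_right
  -- on s : use G - f ≥ 0
  have key1 : (∫ z in s, f z ∂μ) - ∫ z in s, f z ∂ν ≤ G * ((μ s).toReal - (ν s).toReal) := by
    have h := integral_mono_measure hres1 (ae_of_all _ fun z => by
      have := (abs_le.mp (hG z)).2; dsimp; linarith)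
      (((integrable_const G).sub (hint μ s)))
    simp only [Pi.sub_apply] at h
    rw [integral_sub (integrable_const G) (hint ν s),
      integral_sub (integrable_const G) (hint μ s)] at h
    simp only [integral_const, measureReal_def, Measure.restrict_apply_univ, smul_eq_mul] at h
    nlinarith
  -- on sᶜ : use f + G ≥ 0
  have key2 : (∫ z in sᶜ, f z ∂μ) - ∫ z in sᶜ, f z ∂ν ≤ G * ((ν sᶜ).toReal - (μ sᶜ).toReal) := by
    have h := integral_mono_measure hres2 (ae_of_all _ fun z => by
      have := (abs_le.mp (hG z)).1; dsimp; linarith)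
      (((hint ν sᶜ).add (integrable_const G)))
    simp only [Pi.add_apply] at h
    rw [integral_add (hint μ sᶜ) (integrable_const G),
      integral_add (hint ν sᶜ) (integrable_const G)] at h
    simp only [integral_const, measureReal_def, Measure.restrict_apply_univ, smul_eq_mul] at h
    nlinarith
  have hsplitμ : (∫ z, f z ∂μ) = (∫ z in s, f z ∂μ) + ∫ z in sᶜ, f z ∂μ :=
    (integral_add_compl hs (by simpa using hint μ Set.univ)).symm
  have hsplitν : (∫ z, f z ∂ν) = (∫ z in s, f z ∂ν) + ∫ z in sᶜ, f z ∂ν :=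
    (integral_add_compl hs (by simpa using hint ν Set.univ)).symm
  have hcμ : (μ s).toReal + (μ sᶜ).toReal = 1 := by
    rw [← ENNReal.toReal_add (measure_ne_top _ _) (measure_ne_top _ _),
      measure_add_measure_compl hs]; simp
  have hcν : (ν s).toReal + (ν sᶜ).toReal = 1 := by
    rw [← ENNReal.toReal_add (measure_ne_top _ _) (measure_ne_top _ _),
      measure_add_measure_compl hs]; simp
  have hd : (μ s).toReal - (ν s).toReal ≤ dTV μ ν := le_dTV μ ν hs
  have hdnn : 0 ≤ dTV μ ν := by
    have := le_dTV μ ν (MeasurableSet.empty (α := Z)); simpa using this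
  nlinarith

/-- if `ℓ` is `L₀`-Lipschitz in `θ` uniformly in `z`, bounded by `G`, and the
distribution map is `L₁`-Lipschitz in total variation, then the performative risk
`L(θ) = E_{Z∼Π_θ}[ℓ(θ;Z)]` is `(L₀ + 2L₁G)`-Lipschitz. -/
theorem stmt7 (d : ℕ) {Z : Type*} [MeasurableSpace Z]
    (ℓ : EuclideanSpace ℝ (Fin d) → Z → ℝ)
    (hℓmeas : Measurable (Function.uncurry ℓ))
    (L₀ : ℝ) (hℓLip : ∀ (θ₁ θ₂ : EuclideanSpace ℝ (Fin d)) (z : Z),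
      |ℓ θ₁ z - ℓ θ₂ z| ≤ L₀ * ‖θ₁ - θ₂‖)
    (G : ℝ) (hℓbdd : ∀ θ z, |ℓ θ z| ≤ G)
    (P : EuclideanSpace ℝ (Fin d) → Measure Z)
    (hP : ∀ θ, IsProbabilityMeasure (P θ))
    (L₁ : ℝ)
    (hTV : ∀ θ₁ θ₂ : EuclideanSpace ℝ (Fin d), dTV (P θ₁) (P θ₂) ≤ L₁ * ‖θ₁ - θ₂‖) :
    ∀ θ₁ θ₂ : EuclideanSpace ℝ (Fin d),
      |(∫ z, ℓ θ₁ z ∂(P θ₁)) - ∫ z, ℓ θ₂ z ∂(P θ₂)| ≤ (L₀ + 2 * L₁ * G) * ‖θ₁ - θ₂‖ := by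
  intro θ₁ θ₂
  haveI := hP θ₁; haveI := hP θ₂
  haveI : Nonempty Z := by
    rcases Set.eq_empty_or_nonempty (Set.univ : Set Z) with h | h
    · exact absurd (by simp [h] : (P θ₁) Set.univ = 0) (by simp)
    · exact Set.nonempty_iff_univ_nonempty.mpr h
  have hGnn : 0 ≤ G := le_trans (abs_nonneg _) (hℓbdd θ₁ (Classical.arbitrary Z))
  have hmeas : ∀ θ, Measurable (ℓ θ) := fun θ => hℓmeas.of_uncurry_left
  have hint : ∀ θ (ρ : Measure Z) [IsProbabilityMeasure ρ], Integrable (ℓ θ) ρ := by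
    intro θ ρ _
    refine (integrable_const G).mono' (hmeas θ).aestronglyMeasurable (ae_of_all _ fun z => ?_)
    simpa [Real.norm_eq_abs] using hℓbdd θ z
  have step1 : |(∫ z, ℓ θ₁ z ∂(P θ₁)) - ∫ z, ℓ θ₂ z ∂(P θ₁)| ≤ L₀ * ‖θ₁ - θ₂‖ := by
    rw [← integral_sub (hint θ₁ (P θ₁)) (hint θ₂ (P θ₁))]
    calc |∫ z, (ℓ θ₁ z - ℓ θ₂ z) ∂(P θ₁)| ≤ ∫ z, |ℓ θ₁ z - ℓ θ₂ z| ∂(P θ₁) :=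
          by simpa [Real.norm_eq_abs] using norm_integral_le_integral_norm (μ := P θ₁) fun z => ℓ θ₁ z - ℓ θ₂ z
      _ ≤ ∫ _, L₀ * ‖θ₁ - θ₂‖ ∂(P θ₁) := by
          refine integral_mono ((hint θ₁ (P θ₁)).sub (hint θ₂ (P θ₁))).abs
            (integrable_const _) fun z => hℓLip θ₁ θ₂ z
      _ = L₀ * ‖θ₁ - θ₂‖ := by simp
  have step2 : |(∫ z, ℓ θ₂ z ∂(P θ₁)) - ∫ z, ℓ θ₂ z ∂(P θ₂)| ≤ 2 * G * dTV (P θ₁) (P θ₂) := by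
    rw [abs_sub_le_iff]
    constructor
    · exact key (P θ₁) (P θ₂) (ℓ θ₂) (hmeas θ₂) G (hℓbdd θ₂)
    · calc (∫ z, ℓ θ₂ z ∂(P θ₂)) - ∫ z, ℓ θ₂ z ∂(P θ₁)
          ≤ 2 * G * dTV (P θ₂) (P θ₁) := key (P θ₂) (P θ₁) (ℓ θ₂) (hmeas θ₂) G (hℓbdd θ₂)
        _ ≤ 2 * G * dTV (P θ₁) (P θ₂) := by
            have := dTV_symm (P θ₁) (P θ₂); nlinarith
  have hd := hTV θ₁ θ₂
  calc |(∫ z, ℓ θ₁ z ∂(P θ₁)) - ∫ z, ℓ θ₂ z ∂(P θ₂)|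
      ≤ |(∫ z, ℓ θ₁ z ∂(P θ₁)) - ∫ z, ℓ θ₂ z ∂(P θ₁)|
        + |(∫ z, ℓ θ₂ z ∂(P θ₁)) - ∫ z, ℓ θ₂ z ∂(P θ₂)| := abs_sub_le _ _ _
    _ ≤ L₀ * ‖θ₁ - θ₂‖ + 2 * G * dTV (P θ₁) (P θ₂) := add_le_add step1 step2
    _ ≤ (L₀ + 2 * L₁ * G) * ‖θ₁ - θ₂‖ := by nlinarith
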